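/- Let F be a finite set with at least two elements and m a positive integer. A map f : F^m → F^m is a bijective isometry of the Hamming distance if and only if there exist a permutation π ∈ S_m and permutations σ_1, ..., σ_m of F such that f(x)_i = σ_i(x_{π(i)}) for all x ∈ F^m and all i ∈ {1,...,m}. -/

import Mathlib

section Aux
variable {F : Type*} [DecidableEq F] {m : ℕ}

lemma ham_key (x z : Fin m → F) (j : Fin m) (a : F) :
    hammingDist x (Function.update z j a) + (if x j = z j then 0 else 1) =
    hammingDist x z + (if x j = a then 0 else 1) := by
  classical
  have hcard : ∀ w : Fin m → F,
      hammingDist x w =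
        ((Finset.univ.filter fun i => x i ≠ w i).erase j).card
          + (if x j = w j then 0 else 1) := by
    intro w
    rw [hammingDist]
    by_cases h : x j = w j
    · rw [Finset.erase_eq_of_notMem (by simp [h]), if_pos h, add_zero]
    · rw [if_neg h]
      exact (Finset.card_erase_add_one (by simp [h])).symm
  have herase : ((Finset.univ.filter fun i => x i ≠ Function.update z j a i).erase j)
      = ((Finset.univ.filter fun i => x i ≠ z i).erase j) := by
    ext i
    simp only [Finset.mem_erase, Finset.mem_filter, Finset.mem_univ, true_and]
    constructor <;> rintro ⟨hij, h2⟩ <;>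
      exact ⟨hij, by simpa [Function.update_of_ne hij] using h2⟩
  rw [hcard (Function.update z j a), hcard z, herase, Function.update_self]
  omega

lemma ham_recov (x z : Fin m → F) (j : Fin m) {b : F} (hb : b ≠ z j) :
    x j = b ↔ hammingDist x (Function.update z j b) < hammingDist x z := by
  have h := ham_key x z j b
  constructor
  · intro h1
    rw [if_pos h1, if_neg (by rw [h1]; exact hb)] at h
    omega
  · intro h1
    by_contra h2
    rw [if_neg h2] at h
    by_cases h3 : x j = z j
    · rw [if_pos h3] at h; omega
    · rw [if_neg h3] at h; omega

lemma ham_update_self (z : Fin m → F) (j : Fin m) (a : F) :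
    hammingDist (Function.update z j a) z = if a = z j then 0 else 1 := by
  have h := ham_key (Function.update z j a) z j a
  rw [hammingDist_self, Function.update_self, if_pos rfl] at h
  omega

lemma ham_line (z : Fin m → F) (j : Fin m) {a b : F} (ha : a ≠ z j) :
    hammingDist (Function.update z j a) (Function.update z j b)
      = if a = b then 0 else 1 := by
  have h := ham_key (Function.update z j a) z j b
  rw [Function.update_self, if_neg ha, ham_update_self, if_neg ha] at h
  omega

lemma ham_cross (z : Fin m → F) {j k : Fin m} {a b : F} (hjk : j ≠ k)
    (ha : a ≠ z j) (hb : b ≠ z k) :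
    2 ≤ hammingDist (Function.update z j a) (Function.update z k b) := by
  rw [hammingDist]
  rw [show (2:ℕ) = 1 + 1 by rfl]
  refine Nat.succ_le_of_lt (Finset.one_lt_card.mpr ⟨j, ?_, k, ?_, hjk⟩)
  · simp [Function.update_self, Function.update_of_ne hjk, ha]
  · simp [Function.update_self, Function.update_of_ne hjk.symm, Ne.symm hb]

lemma ham_sphere {y z : Fin m → F} (h : hammingDist y z = 1) :
    ∃ k, y k ≠ z k ∧ y = Function.update z k (y k) := by
  rw [hammingDist, Finset.card_eq_one] at h
  obtain ⟨k, hk⟩ := h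
  have hkm : y k ≠ z k := by
    have : k ∈ ({k} : Finset (Fin m)) := Finset.mem_singleton_self k
    rw [← hk] at this
    simpa using this
  refine ⟨k, hkm, funext fun i => ?_⟩
  by_cases hik : i = k
  · subst hik; simp
  · have : i ∉ ({k} : Finset (Fin m)) := by simpa using hik
    rw [← hk] at this
    simp only [Finset.mem_filter, Finset.mem_univ, true_and, not_not] at this
    rw [this, Function.update_of_ne hik]

lemma line_unique {z : Fin m → F} {k l : Fin m} {b b' : F} (hb : b ≠ z k)
    (h : Function.update z k b = Function.update z l b') (hb' : b' ≠ z l) : k = l := by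
  by_contra hkl
  have := congrFun h k
  rw [Function.update_self, Function.update_of_ne hkl] at this
  exact hb this

lemma ham_perm (pi : Equiv.Perm (Fin m)) (x y : Fin m → F) :
    hammingDist (fun i => x (pi i)) (fun i => y (pi i)) = hammingDist x y := by
  rw [hammingDist, hammingDist]
  apply Finset.card_bij (fun i _ => pi i)
  · intro i hi
    simpa using (by simpa using hi : x (pi i) ≠ y (pi i))
  · intro i _ j _ hij
    exact pi.injective hij
  · intro j hj
    refine ⟨pi.symm j, ?_, by simp⟩
    simpa using (by simpa using hj : x j ≠ y j)

end Aux
set_option maxHeartbeats 1000000 in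
theorem stmt_10 (F : Type*) [Fintype F] [DecidableEq F] (hF : 2 ≤ Fintype.card F)
    (m : ℕ) (hm : 0 < m)
    (f : (Fin m → F) → (Fin m → F)) :
    (Function.Bijective f ∧
      ∀ x y : Fin m → F, hammingDist (f x) (f y) = hammingDist x y) ↔
    ∃ (π : Equiv.Perm (Fin m)) (σ : Fin m → Equiv.Perm F),
      ∀ (x : Fin m → F) (i : Fin m), f x i = σ i (x (π i)) := by
  constructor
  · rintro ⟨hbij, hiso⟩
    have hne : Nonempty F := Fintype.card_pos_iff.mp (by omega)
    obtain ⟨c0⟩ := hne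
    set c : Fin m → F := fun _ => c0 with hc
    set c' : Fin m → F := f c with hc'
    have hex : ∀ j : Fin m, ∃ a : F, a ≠ c j :=
      fun j => Fintype.exists_ne_of_one_lt_card (by omega) (c j)
    choose a0 ha0 using hex
    have hdist1 : ∀ (j : Fin m) (a : F), a ≠ c j →
        hammingDist (f (Function.update c j a)) c' = 1 := by
      intro j a ha
      rw [hc', hiso, ham_update_self, if_neg ha]
    have hsph : ∀ j : Fin m, ∃ k, (f (Function.update c j (a0 j))) k ≠ c' k ∧
        f (Function.update c j (a0 j))
          = Function.update c' k (f (Function.update c j (a0 j)) k) :=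
      fun j => ham_sphere (hdist1 j (a0 j) (ha0 j))
    choose p hp1 hp2 using hsph
    have H1 : ∀ (j : Fin m) (a : F), a ≠ c j →
        f (Function.update c j a) (p j) ≠ c' (p j) ∧
        f (Function.update c j a)
          = Function.update c' (p j) (f (Function.update c j a) (p j)) := by
      intro j a ha
      obtain ⟨k, hk1, hk2⟩ := ham_sphere (hdist1 j a ha)
      suffices hkp : k = p j by subst hkp; exact ⟨hk1, hk2⟩
      by_cases hab : a = a0 j
      · subst hab
        exact line_unique hk1 (hk2.symm.trans (hp2 j)) (hp1 j)
      · by_contra hkp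
        have h2 : 2 ≤ hammingDist (f (Function.update c j a))
            (f (Function.update c j (a0 j))) := by
          rw [hk2, hp2 j]
          exact ham_cross c' hkp hk1 (hp1 j)
        rw [hiso, ham_line c j ha, if_neg hab] at h2
        omega
    have hpinj : Function.Injective p := by
      intro j l hjl
      by_contra hne2
      have h2 : 2 ≤ hammingDist (f (Function.update c j (a0 j)))
          (f (Function.update c l (a0 l))) := by
        rw [hiso]
        exact ham_cross c hne2 (ha0 j) (ha0 l)
      have h3 : hammingDist (f (Function.update c j (a0 j)))
          (f (Function.update c l (a0 l))) ≤ 1 := by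
        rw [hp2 j, hp2 l, hjl, ham_line c' (p l) (by rw [← hjl]; exact hp1 j)]
        split <;> omega
      omega
    have hpbij := Finite.injective_iff_bijective.mp hpinj
    set pe : Equiv.Perm (Fin m) := Equiv.ofBijective p hpbij with hpe
    set s : Fin m → F → F := fun j a =>
      if a = c j then c' (p j) else f (Function.update c j a) (p j) with hs
    have hsc : ∀ j, s j (c j) = c' (p j) := by intro j; rw [hs]; simp
    have hsne : ∀ j a, a ≠ c j → s j a ≠ c' (p j) ∧
        f (Function.update c j a) = Function.update c' (p j) (s j a) := by
      intro j a ha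
      obtain ⟨h1, h2⟩ := H1 j a ha
      rw [hs]
      simp only [if_neg ha]
      exact ⟨h1, h2⟩
    have hsinj : ∀ j, Function.Injective (s j) := by
      intro j a b hab
      by_cases hac : a = c j
      · by_cases hbc : b = c j
        · rw [hac, hbc]
        · exact absurd (by rw [← hab, hac, hsc]) ((hsne j b hbc).1 ∘ Eq.symm)
      · by_cases hbc : b = c j
        · exact absurd (by rw [hab, hbc, hsc]) (hsne j a hac).1
        · have h1 := (hsne j a hac).2
          have h2 := (hsne j b hbc).2
          have : f (Function.update c j a) = f (Function.update c j b) := by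
            rw [h1, h2, hab]
          have := congrFun (hbij.1 this) j
          rwa [Function.update_self, Function.update_self] at this
    have hsbij : ∀ j, Function.Bijective (s j) :=
      fun j => Finite.injective_iff_bijective.mp (hsinj j)
    have hfxc : ∀ x : Fin m → F, hammingDist (f x) c' = hammingDist x c := by
      intro x; rw [hc', hiso]
    have main : ∀ (x : Fin m → F) (j : Fin m), f x (p j) = s j (x j) := by
      intro x j
      by_cases h : x j = c j
      · rw [h, hsc]
        by_contra hv
        have hlt : hammingDist (f x) (Function.update c' (p j) (f x (p j)))
            < hammingDist (f x) c' :=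
          (ham_recov (f x) c' (p j) hv).mp rfl
        obtain ⟨a, hav⟩ := (hsbij j).2 (f x (p j))
        have hac : a ≠ c j := by
          intro h2
          rw [h2, hsc] at hav
          exact hv hav.symm
        obtain ⟨hs1, hs2⟩ := hsne j a hac
        rw [← hav, ← hs2, hiso, hfxc] at hlt
        have := (ham_recov x c j hac).mpr hlt
        rw [h] at this
        exact hac this.symm
      · obtain ⟨hs1, hs2⟩ := hsne j (x j) h
        have hlt : hammingDist x (Function.update c j (x j)) < hammingDist x c :=
          (ham_recov x c j h).mp rfl
        have h2 : hammingDist (f x) (Function.update c' (p j) (s j (x j)))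
            < hammingDist (f x) c' := by
          rw [← hs2, hiso, hfxc]
          exact hlt
        exact (ham_recov (f x) c' (p j) hs1).mpr h2
    refine ⟨pe.symm, fun i => Equiv.ofBijective (s (pe.symm i)) (hsbij _),
      fun x i => ?_⟩
    have hpi : p (pe.symm i) = i := pe.apply_symm_apply i
    calc f x i = f x (p (pe.symm i)) := by rw [hpi]
      _ = s (pe.symm i) (x (pe.symm i)) := main x _
      _ = (Equiv.ofBijective (s (pe.symm i)) (hsbij _)) (x (pe.symm i)) := rfl
  · rintro ⟨π, σ, h⟩
    have hf : f = fun x i => σ i (x (π i)) := funext fun x => funext fun i => h x i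
    constructor
    · rw [hf]
      apply Function.bijective_iff_has_inverse.mpr
      refine ⟨fun y j => (σ (π.symm j)).symm (y (π.symm j)), fun x => ?_, fun y => ?_⟩
      · funext j; simp
      · funext i; simp
    · intro x y
      rw [hf]
      have hcomp := hammingDist_comp (fun i => (σ i : F → F))
        (x := fun i => x (π i)) (y := fun i => y (π i))
        (fun i => (σ i).injective)
      rw [hcomp, ham_perm]
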